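/- Let H be a Hardy field containing ℒℰ and let a_1,...,a_k ∈ H have polynomial growth. Then the real linear span V of {a_1,...,a_k} (inside the space of germs at +∞) admits a basis (g_1,...,g_m, u_1,...,u_ℓ) (possibly m = 0 or ℓ = 0) with the following properties: (1) for each 1 ≤ i ≤ ℓ there is a real polynomial p_i with u_i(t) − p_i(t) → 0 as t → +∞; (2) each g_j can be written g_j(t) = q_j(t) + x_j(t) where q_j is a real polynomial and x_j ∈ H is strongly non-polynomial with |x_j(t)| → +∞ as t → +∞; (3) for i ≠ j the functions x_i and x_j have distinct growth rates, i.e., x_i(t)/x_j(t) tends to 0 or to ±∞ as t → +∞. -/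

import Mathlib

open Filter MeasureTheory Topology

noncomputable section

/-- `f ≺ g` : `f(t)/g(t) → 0` as `t → +∞`. -/
def Prec (f g : ℝ → ℝ) : Prop :=
  Filter.Tendsto (fun t => f t / g t) Filter.atTop (nhds 0)

/-- `f ≪ g` : `|f(t)| ≤ C |g(t)|` for some constant `C > 0` and all large `t`. -/
def Dom (f g : ℝ → ℝ) : Prop :=
  ∃ C : ℝ, 0 < C ∧ ∀ᶠ t in Filter.atTop, |f t| ≤ C * |g t|

/-- `f` has polynomial growth: `f(t)/t^k → 0` for some positive integer `k`. -/
def PolyGrowth (f : ℝ → ℝ) : Prop :=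
  ∃ k : ℕ, 0 < k ∧ Filter.Tendsto (fun t => f t / t ^ k) Filter.atTop (nhds 0)

/-- The logarithmico-exponential functions of Hardy: built from constants and the
identity by `+`, `-`, `*`, `/`, `exp`, `log` and composition. -/
inductive IsLE : (ℝ → ℝ) → Prop
  | const (c : ℝ) : IsLE fun _ => c
  | id : IsLE fun t => t
  | add {f g} : IsLE f → IsLE g → IsLE (f + g)
  | sub {f g} : IsLE f → IsLE g → IsLE (f - g)
  | mul {f g} : IsLE f → IsLE g → IsLE (f * g)
  | div {f g} : IsLE f → IsLE g → IsLE (f / g)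
  | exp {f} : IsLE f → IsLE fun t => Real.exp (f t)
  | log {f} : IsLE f → IsLE fun t => Real.log (f t)
  | comp {f g} : IsLE f → IsLE g → IsLE (f ∘ g)

/-- A Hardy field: a collection of (representatives of) germs at `+∞` of real functions,
closed under germ equality, forming a field under pointwise operations, and closed under
differentiation (each element is eventually differentiable, with derivative again in `H`). -/
structure IsHardyField (H : Set (ℝ → ℝ)) : Prop where
  mem_congr : ∀ {f g : ℝ → ℝ}, f ∈ H → f =ᶠ[Filter.atTop] g → g ∈ H
  zero_mem : (fun _ : ℝ => (0 : ℝ)) ∈ H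
  one_mem : (fun _ : ℝ => (1 : ℝ)) ∈ H
  add_mem : ∀ {f g : ℝ → ℝ}, f ∈ H → g ∈ H → f + g ∈ H
  neg_mem : ∀ {f : ℝ → ℝ}, f ∈ H → -f ∈ H
  mul_mem : ∀ {f g : ℝ → ℝ}, f ∈ H → g ∈ H → f * g ∈ H
  inv_mem : ∀ {f : ℝ → ℝ}, f ∈ H → ¬ (f =ᶠ[Filter.atTop] fun _ => (0 : ℝ)) →
    (fun t => (f t)⁻¹) ∈ H
  eventuallyDifferentiable : ∀ {f : ℝ → ℝ}, f ∈ H →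
    ∀ᶠ t in Filter.atTop, DifferentiableAt ℝ f t
  deriv_mem : ∀ {f : ℝ → ℝ}, f ∈ H → deriv f ∈ H

/-- `H` contains (the germs of) all logarithmico-exponential functions. -/
def ContainsLE (H : Set (ℝ → ℝ)) : Prop := ∀ f : ℝ → ℝ, IsLE f → f ∈ H

/-- strongly non-polynomial: `t^k ≺ f ≺ t^{k+1}` for some `k ∈ ℕ`, or `f(t) → 0`. -/
def StronglyNonPoly (f : ℝ → ℝ) : Prop :=
  (∃ k : ℕ, Prec (fun t => t ^ k) f ∧ Prec f fun t => t ^ (k + 1)) ∨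
    Filter.Tendsto f Filter.atTop (nhds 0)


section HardyBasics

open Set

variable {H : Set (ℝ → ℝ)}

lemma IsHardyField.eventually_ne_zero (hH : IsHardyField H) {f : ℝ → ℝ} (hf : f ∈ H)
    (h0 : ¬ (f =ᶠ[Filter.atTop] fun _ => (0:ℝ))) : ∀ᶠ t in Filter.atTop, f t ≠ 0 := by
  by_contra hcon
  set g : ℝ → ℝ := fun t => (f t)⁻¹ with hgdef
  have hg : g ∈ H := hH.inv_mem hf h0
  obtain ⟨T1, hT1⟩ := Filter.eventually_atTop.1 (hH.eventuallyDifferentiable hf)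
  obtain ⟨T2, hT2⟩ := Filter.eventually_atTop.1 (hH.eventuallyDifferentiable hg)
  set T := max T1 T2 with hT
  have hdf : ∀ t ∈ Ioi T, ContinuousAt f t := fun t ht =>
    (hT1 t (le_trans (le_max_left _ _) (le_of_lt ht))).continuousAt
  have hdg : ∀ t ∈ Ioi T, ContinuousAt g t := fun t ht =>
    (hT2 t (le_trans (le_max_right _ _) (le_of_lt ht))).continuousAt
  set Z : Set ℝ := {t | T < t ∧ f t = 0} with hZdef
  set N : Set ℝ := {t | T < t ∧ f t ≠ 0} with hNdef
  have hZopen : IsOpen Z := by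
    rw [isOpen_iff_mem_nhds]
    intro t0 ht0
    have hf0 : f t0 = 0 := ht0.2
    have hg0 : g t0 = 0 := by simp [hgdef, hf0]
    have e1 : ∀ᶠ t in nhds t0, |f t| < 1 := by
      have := (hdf t0 ht0.1) (Metric.ball_mem_nhds (f t0) one_pos)
      filter_upwards [this] with t ht
      simpa [Real.dist_eq, hf0] using ht
    have e2 : ∀ᶠ t in nhds t0, |g t| < 1 := by
      have := (hdg t0 ht0.1) (Metric.ball_mem_nhds (g t0) one_pos)
      filter_upwards [this] with t ht
      simpa [Real.dist_eq, hg0] using ht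
    have e3 : ∀ᶠ t in nhds t0, T < t := eventually_gt_nhds ht0.1
    filter_upwards [e1, e2, e3] with t h1 h2 h3
    refine ⟨h3, ?_⟩
    by_contra hne
    have : (1:ℝ) < |f t| := by
      rw [hgdef] at h2
      simp only [abs_inv] at h2
      have := (inv_lt_one₀ (abs_pos.mpr hne)).mp h2
      exact this
    linarith
  have hNopen : IsOpen N := by
    rw [isOpen_iff_mem_nhds]
    intro t0 ht0
    have e1 : ∀ᶠ t in nhds t0, f t ≠ 0 := (hdf t0 ht0.1).eventually_ne ht0.2
    have e3 : ∀ᶠ t in nhds t0, T < t := eventually_gt_nhds ht0.1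
    filter_upwards [e1, e3] with t h1 h3
    exact ⟨h3, h1⟩
  have hZne : Z.Nonempty := by
    rw [Filter.not_eventually] at hcon
    obtain ⟨t, ht, ht0⟩ := (Filter.frequently_atTop.1 hcon) (T+1)
    exact ⟨t, lt_of_lt_of_le (lt_add_one T) ht, not_not.mp ht0⟩
  have hNne : N.Nonempty := by
    rw [Filter.EventuallyEq] at h0
    rw [Filter.not_eventually] at h0
    obtain ⟨t, ht, ht0⟩ := (Filter.frequently_atTop.1 h0) (T+1)
    exact ⟨t, lt_of_lt_of_le (lt_add_one T) ht, ht0⟩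
  have hsub : Ioi T ⊆ Z ∪ N := by
    intro t ht
    by_cases h : f t = 0
    · exact Or.inl ⟨ht, h⟩
    · exact Or.inr ⟨ht, h⟩
  have hZsub : (Ioi T ∩ Z).Nonempty := ⟨hZne.choose, hZne.choose_spec.1, hZne.choose_spec⟩
  have hNsub : (Ioi T ∩ N).Nonempty := ⟨hNne.choose, hNne.choose_spec.1, hNne.choose_spec⟩
  obtain ⟨t, _, htZ, htN⟩ := isPreconnected_Ioi Z N hZopen hNopen hsub hZsub hNsub
  exact htN.2 htZ.2

lemma IsHardyField.eventually_sign (hH : IsHardyField H) {f : ℝ → ℝ} (hf : f ∈ H) :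
    (f =ᶠ[Filter.atTop] fun _ => (0:ℝ)) ∨ (∀ᶠ t in Filter.atTop, 0 < f t) ∨
      (∀ᶠ t in Filter.atTop, f t < 0) := by
  by_cases h0 : f =ᶠ[Filter.atTop] fun _ => (0:ℝ)
  · exact Or.inl h0
  right
  obtain ⟨T1, hT1⟩ := Filter.eventually_atTop.1 (hH.eventually_ne_zero hf h0)
  obtain ⟨T2, hT2⟩ := Filter.eventually_atTop.1 (hH.eventuallyDifferentiable hf)
  set T := max T1 T2 with hTdef
  have hne : ∀ t ≥ T, f t ≠ 0 := fun t ht => hT1 t (le_trans (le_max_left _ _) ht)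
  have hct : ∀ t ≥ T, ContinuousAt f t := fun t ht =>
    (hT2 t (le_trans (le_max_right _ _) ht)).continuousAt
  have key : ∀ s t, T ≤ s → s ≤ t → 0 < f s → 0 < f t := by
    intro s t hs hst hfs
    by_contra hft
    push_neg at hft
    have hcont : ContinuousOn f (Icc s t) := fun x hx =>
      (hct x (le_trans hs hx.1)).continuousWithinAt
    have : (0:ℝ) ∈ Icc (f t) (f s) := ⟨hft, le_of_lt hfs⟩
    obtain ⟨x, hx, hfx⟩ := intermediate_value_Icc' hst hcont this
    exact hne x (le_trans hs hx.1) hfx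
  have key' : ∀ s t, T ≤ s → s ≤ t → f s < 0 → f t < 0 := by
    intro s t hs hst hfs
    rcases lt_trichotomy (f t) 0 with h|h|h
    · exact h
    · exact absurd h (hne t (le_trans hs hst))
    · exfalso
      have hcont : ContinuousOn f (Icc s t) := fun x hx =>
        (hct x (le_trans hs hx.1)).continuousWithinAt
      have : (0:ℝ) ∈ Icc (f s) (f t) := ⟨le_of_lt hfs, le_of_lt h⟩
      obtain ⟨x, hx, hfx⟩ := intermediate_value_Icc hst hcont this
      exact hne x (le_trans hs hx.1) hfx
  rcases lt_trichotomy (f T) 0 with h|h|h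
  · right
    rw [Filter.eventually_atTop]
    exact ⟨T, fun t ht => key' T t le_rfl ht h⟩
  · exact absurd h (hne T le_rfl)
  · left
    rw [Filter.eventually_atTop]
    exact ⟨T, fun t ht => key T t le_rfl ht h⟩

end HardyBasics
section HardyLimits

open Set Filter

variable {H : Set (ℝ → ℝ)}

/-- Every Hardy field function tends to a (possibly infinite) limit. -/
lemma IsHardyField.tendsto_trichotomy (hH : IsHardyField H) {f : ℝ → ℝ} (hf : f ∈ H) :
    (∃ c : ℝ, Filter.Tendsto f Filter.atTop (nhds c)) ∨
      Filter.Tendsto f Filter.atTop Filter.atTop ∨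
      Filter.Tendsto f Filter.atTop Filter.atBot := by
  -- main case: eventually monotone on a half-line
  have main : ∀ g : ℝ → ℝ, (∃ T, MonotoneOn g (Ici T)) →
      (∃ c : ℝ, Filter.Tendsto g Filter.atTop (nhds c)) ∨
        Filter.Tendsto g Filter.atTop Filter.atTop := by
    intro g ⟨T, hmono⟩
    set G : ℝ → ℝ := fun t => g (max t T) with hGdef
    have hGmono : Monotone G := by
      intro s t hst
      exact hmono (mem_Ici.2 (le_max_right _ _)) (mem_Ici.2 (le_max_right _ _))
        (max_le_max hst le_rfl)
    have heq : G =ᶠ[Filter.atTop] g := by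
      filter_upwards [Filter.eventually_ge_atTop T] with t ht
      simp [hGdef, max_eq_left ht]
    by_cases hbdd : BddAbove (Set.range G)
    · left
      exact ⟨_, Filter.Tendsto.congr' heq (tendsto_atTop_ciSup hGmono hbdd)⟩
    · right
      refine Filter.Tendsto.congr' heq (tendsto_atTop_atTop_of_monotone hGmono ?_)
      intro b
      rw [not_bddAbove_iff] at hbdd
      obtain ⟨y, ⟨a, rfl⟩, hy⟩ := hbdd b
      exact ⟨a, le_of_lt hy⟩
  -- derivative sign
  obtain ⟨T0, hT0⟩ := Filter.eventually_atTop.1 (hH.eventuallyDifferentiable hf)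
  rcases hH.eventually_sign (hH.deriv_mem hf) with h|h|h
  · -- deriv eventually 0 : both monotone and antitone; use main
    obtain ⟨T1, hT1⟩ := Filter.eventually_atTop.1 h
    have hmono : MonotoneOn f (Ici (max T0 T1)) := by
      apply monotoneOn_of_deriv_nonneg (convex_Ici _)
      · exact fun x hx => (hT0 x (le_trans (le_max_left _ _) hx)).continuousAt.continuousWithinAt
      · intro x hx
        rw [interior_Ici] at hx
        exact (hT0 x (le_trans (le_max_left _ _) (le_of_lt hx))).differentiableWithinAt
      · intro x hx
        rw [interior_Ici] at hx
        rw [hT1 x (le_trans (le_max_right _ _) (le_of_lt hx))]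
    rcases main f ⟨_, hmono⟩ with h'|h'
    · exact Or.inl h'
    · exact Or.inr (Or.inl h')
  · -- deriv eventually positive
    obtain ⟨T1, hT1⟩ := Filter.eventually_atTop.1 h
    have hmono : MonotoneOn f (Ici (max T0 T1)) := by
      apply monotoneOn_of_deriv_nonneg (convex_Ici _)
      · exact fun x hx => (hT0 x (le_trans (le_max_left _ _) hx)).continuousAt.continuousWithinAt
      · intro x hx
        rw [interior_Ici] at hx
        exact (hT0 x (le_trans (le_max_left _ _) (le_of_lt hx))).differentiableWithinAt
      · intro x hx
        rw [interior_Ici] at hx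
        exact le_of_lt (hT1 x (le_trans (le_max_right _ _) (le_of_lt hx)))
    rcases main f ⟨_, hmono⟩ with h'|h'
    · exact Or.inl h'
    · exact Or.inr (Or.inl h')
  · -- deriv eventually negative : -f is monotone
    obtain ⟨T1, hT1⟩ := Filter.eventually_atTop.1 h
    have hmono : MonotoneOn (-f) (Ici (max T0 T1)) := by
      apply monotoneOn_of_deriv_nonneg (convex_Ici _)
      · intro x hx
        exact ((hT0 x (le_trans (le_max_left _ _) hx)).neg).continuousAt.continuousWithinAt
      · intro x hx
        rw [interior_Ici] at hx
        exact ((hT0 x (le_trans (le_max_left _ _) (le_of_lt hx))).neg).differentiableWithinAt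
      · intro x hx
        rw [interior_Ici] at hx
        have hd : deriv (-f) x = -(deriv f x) := deriv.neg
        rw [hd]
        have := hT1 x (le_trans (le_max_right _ _) (le_of_lt hx))
        linarith
    rcases main (-f) ⟨_, hmono⟩ with ⟨c, h'⟩|h'
    · left
      refine ⟨-c, ?_⟩
      have := h'.neg
      simp only [Pi.neg_apply, neg_neg] at this
      simpa using this
    · right; right
      have h2 := tendsto_neg_atTop_atBot.comp h'
      have : (fun t => -((-f) t)) = f := by funext t; simp
      rw [← this]
      exact h2
end HardyLimits
section Helpers

open Filter Polynomial

lemma ev_ne_zero_of_abs_tendsto {f : ℝ → ℝ}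
    (h : Filter.Tendsto (fun t => |f t|) Filter.atTop Filter.atTop) :
    ∀ᶠ t in Filter.atTop, f t ≠ 0 := by
  filter_upwards [h.eventually_ge_atTop 1] with t ht h0
  rw [h0] at ht; simp at ht; linarith

lemma mul_bdd_zero {u v : ℝ → ℝ} {C : ℝ}
    (hu : Filter.Tendsto u Filter.atTop (nhds 0)) (hv : ∀ᶠ t in Filter.atTop, |v t| ≤ C) :
    Filter.Tendsto (fun t => u t * v t) Filter.atTop (nhds 0) := by
  have hC : Filter.Tendsto (fun t => |u t| * C) Filter.atTop (nhds 0) := by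
    have := (hu.abs).mul_const C
    simpa using this
  apply squeeze_zero_norm' _ hC
  filter_upwards [hv] with t ht
  rw [Real.norm_eq_abs, abs_mul]
  have : |u t| * |v t| ≤ |u t| * C := by
    apply mul_le_mul_of_nonneg_left ht (abs_nonneg _)
  exact this

lemma tendsto_pow_div_pow_zero {a b : ℕ} (h : a < b) :
    Filter.Tendsto (fun t : ℝ => t ^ a / t ^ b) Filter.atTop (nhds 0) := by
  have := Polynomial.div_tendsto_zero_of_degree_lt (X ^ a : Polynomial ℝ) (X ^ b)
    (by rw [degree_X_pow, degree_X_pow]; exact_mod_cast h)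
  simpa [eval_pow] using this

lemma ev_abs_pow_div_pow_le_one {a b : ℕ} (h : a ≤ b) :
    ∀ᶠ t : ℝ in Filter.atTop, |t ^ a / t ^ b| ≤ 1 := by
  filter_upwards [eventually_ge_atTop (1:ℝ)] with t ht
  have h0 : (0:ℝ) < t := lt_of_lt_of_le one_pos ht
  rw [abs_div, abs_of_pos (pow_pos h0 a), abs_of_pos (pow_pos h0 b), div_le_one (pow_pos h0 b)]
  exact pow_le_pow_right₀ ht h

lemma tendsto_abs_pow_div_pow_atTop {a b : ℕ} (h : b < a) :
    Filter.Tendsto (fun t : ℝ => |t ^ a / t ^ b|) Filter.atTop Filter.atTop := by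
  have := Polynomial.div_tendsto_atTop_of_degree_gt (X ^ a : Polynomial ℝ) (X ^ b)
    (by rw [degree_X_pow, degree_X_pow]; exact_mod_cast h)
    (pow_ne_zero _ X_ne_zero) (by simp [leadingCoeff_X_pow])
  have h2 : Filter.Tendsto (fun t : ℝ => t ^ a / t ^ b) Filter.atTop Filter.atTop := by
    simpa [eval_pow] using this
  exact tendsto_abs_atTop_atTop.comp h2

lemma pow_not_ev_zero (k : ℕ) : ¬ ((fun t : ℝ => t ^ k) =ᶠ[Filter.atTop] fun _ => (0:ℝ)) := by
  intro h
  obtain ⟨T, hT⟩ := Filter.eventually_atTop.1 h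
  have := hT (max T 1) (le_max_left _ _)
  simp only at this
  have h1 : (1:ℝ) ≤ max T 1 := le_max_right _ _
  have := pow_pos (lt_of_lt_of_le one_pos h1) k
  simp_all

lemma tendsto_div_zero_of_abs_div_atTop {f g : ℝ → ℝ}
    (h : Filter.Tendsto (fun t => |f t / g t|) Filter.atTop Filter.atTop) :
    Filter.Tendsto (fun t => g t / f t) Filter.atTop (nhds 0) := by
  have hne : ∀ᶠ t in Filter.atTop, f t ≠ 0 ∧ g t ≠ 0 := by
    filter_upwards [h.eventually_ge_atTop 1] with t ht
    constructor <;> intro h0 <;> rw [h0] at ht <;> simp at ht <;> linarith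
  have hinv : Filter.Tendsto (fun t => |f t / g t|⁻¹) Filter.atTop (nhds 0) := by
    exact Filter.Tendsto.inv_tendsto_atTop h
  rw [tendsto_zero_iff_abs_tendsto_zero]
  apply hinv.congr'
  filter_upwards [hne] with t ⟨hf, hg⟩
  simp only [Function.comp_apply, abs_div, inv_div]

lemma tendsto_abs_div_atTop_of_div_zero {x y : ℝ → ℝ}
    (h : Filter.Tendsto (fun t => y t / x t) Filter.atTop (nhds 0))
    (hx : ∀ᶠ t in Filter.atTop, x t ≠ 0) (hy : ∀ᶠ t in Filter.atTop, y t ≠ 0) :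
    Filter.Tendsto (fun t => |x t / y t|) Filter.atTop Filter.atTop := by
  have habs : Filter.Tendsto (fun t => |y t / x t|) Filter.atTop (nhds 0) := by
    have := (tendsto_zero_iff_abs_tendsto_zero _).1 h
    exact this
  have hpos : ∀ᶠ t in Filter.atTop, |y t / x t| ∈ Set.Ioi (0:ℝ) := by
    filter_upwards [hx, hy] with t h1 h2
    exact abs_pos.2 (div_ne_zero h2 h1)
  have habs' : Filter.Tendsto (fun t => |y t / x t|) Filter.atTop (nhdsWithin 0 (Set.Ioi 0)) :=
    tendsto_nhdsWithin_of_tendsto_nhds_of_eventually_within _ habs hpos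
  have := tendsto_inv_nhdsGT_zero.comp habs'
  apply this.congr'
  filter_upwards [hx, hy] with t h1 h2
  simp only [Function.comp_apply, abs_div, inv_div]

lemma Prec.trans_ev {x y z : ℝ → ℝ} (h1 : Prec x y) (h2 : Prec y z)
    (hy : ∀ᶠ t in Filter.atTop, y t ≠ 0) : Prec x z := by
  have key : Filter.Tendsto (fun t => (x t / y t) * (y t / z t)) Filter.atTop (nhds 0) := by
    simpa using h1.mul h2
  apply key.congr'
  filter_upwards [hy] with t ht
  rcases eq_or_ne (z t) 0 with h|h
  · simp [h]
  · field_simp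

lemma poly_div_pow_tendsto (p : Polynomial ℝ) (hp : p ≠ 0) :
    Filter.Tendsto (fun t => p.eval t / t ^ p.natDegree) Filter.atTop (nhds p.leadingCoeff) := by
  have := Polynomial.div_tendsto_leadingCoeff_div_of_degree_eq p (X ^ p.natDegree)
    (by rw [degree_X_pow, Polynomial.degree_eq_natDegree hp])
  simpa [eval_pow, leadingCoeff_X_pow] using this

lemma poly_div_pow_tendsto_zero (p : Polynomial ℝ) {d : ℕ} (hd : p.degree < d) :
    Filter.Tendsto (fun t => p.eval t / t ^ d) Filter.atTop (nhds 0) := by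
  have := Polynomial.div_tendsto_zero_of_degree_lt p (X ^ d)
    (by rw [degree_X_pow]; exact hd)
  simpa [eval_pow] using this

lemma growth_le {f : ℝ → ℝ} {a b : ℕ} (hab : a ≤ b)
    (h : Filter.Tendsto (fun t => f t / t ^ a) Filter.atTop (nhds 0)) :
    Filter.Tendsto (fun t => f t / t ^ b) Filter.atTop (nhds 0) := by
  have key := mul_bdd_zero h (ev_abs_pow_div_pow_le_one hab)
  apply key.congr'
  filter_upwards [eventually_ge_atTop (1:ℝ)] with t ht
  have h0 : (0:ℝ) < t := lt_of_lt_of_le one_pos ht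
  have ha : t ^ a ≠ 0 := ne_of_gt (pow_pos h0 a)
  field_simp

end Helpers
section HardyRatio

open Filter Polynomial

variable {H : Set (ℝ → ℝ)}

lemma IsHardyField.div_mem' (hH : IsHardyField H) {f g : ℝ → ℝ} (hf : f ∈ H) (hg : g ∈ H)
    (h0 : ¬ (g =ᶠ[Filter.atTop] fun _ => (0:ℝ))) : (fun t => f t / g t) ∈ H := by
  have h := hH.mul_mem hf (hH.inv_mem hg h0)
  have he : (f * fun t => (g t)⁻¹) = fun t => f t / g t := by
    funext t; simp [div_eq_mul_inv]
  rwa [he] at h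

lemma IsHardyField.ratio_trichotomy (hH : IsHardyField H) {f g : ℝ → ℝ} (hf : f ∈ H)
    (hg : g ∈ H) (h0 : ¬ (g =ᶠ[Filter.atTop] fun _ => (0:ℝ))) :
    (∃ c : ℝ, Filter.Tendsto (fun t => f t / g t) Filter.atTop (nhds c)) ∨
      Filter.Tendsto (fun t => |f t / g t|) Filter.atTop Filter.atTop := by
  rcases hH.tendsto_trichotomy (hH.div_mem' hf hg h0) with h|h|h
  · exact Or.inl h
  · exact Or.inr (tendsto_abs_atTop_atTop.comp h)
  · exact Or.inr (tendsto_abs_atBot_atTop.comp h)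

lemma isLE_pow (k : ℕ) : IsLE (fun t : ℝ => t ^ k) := by
  induction k with
  | zero => simpa using IsLE.const 1
  | succ n ih =>
      have := IsLE.mul ih IsLE.id
      have he : ((fun t : ℝ => t ^ n) * fun t => t) = fun t : ℝ => t ^ (n+1) := by
        funext t; simp [pow_succ]
      exact he ▸ this

/-- The submodule of functions `f` with `f/t^K → 0`. -/
def smallO (K : ℕ) : Submodule ℝ (ℝ → ℝ) where
  carrier := {f | Filter.Tendsto (fun t => f t / t ^ K) Filter.atTop (nhds 0)}
  add_mem' := by
    intro f g hf hg
    have := hf.add hg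
    simp only [Set.mem_setOf_eq, Pi.add_apply]
    simpa [add_div] using this
  zero_mem' := by
    simp only [Set.mem_setOf_eq, Pi.zero_apply, zero_div]
    exact tendsto_const_nhds
  smul_mem' := by
    intro c f hf
    have := hf.const_mul c
    simp only [Set.mem_setOf_eq, Pi.smul_apply, smul_eq_mul]
    simpa [mul_div_assoc] using this

/-- The submodule of functions that are a polynomial plus `o(1)`. -/
def polyO1 : Submodule ℝ (ℝ → ℝ) where
  carrier := {f | ∃ p : Polynomial ℝ,
    Filter.Tendsto (fun t => f t - p.eval t) Filter.atTop (nhds 0)}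
  add_mem' := by
    rintro f g ⟨p, hp⟩ ⟨q, hq⟩
    refine ⟨p + q, ?_⟩
    have := hp.add hq
    simp only [Pi.add_apply, eval_add]
    simpa [sub_add_sub_comm] using this
  zero_mem' := ⟨0, by simpa using (tendsto_const_nhds : Filter.Tendsto (fun _ : ℝ => (0:ℝ)) _ _)⟩
  smul_mem' := by
    rintro c f ⟨p, hp⟩
    refine ⟨c • p, ?_⟩
    have := hp.const_mul c
    simp only [Pi.smul_apply, smul_eq_mul, eval_smul, smul_eq_mul]
    simpa [mul_sub] using this

lemma IsHardyField.decomp (hH : IsHardyField H)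
    (hconst : ∀ c : ℝ, (fun _ : ℝ => c) ∈ H) (hpow : ∀ k : ℕ, (fun t : ℝ => t ^ k) ∈ H) :
    ∀ K : ℕ, ∀ f : ℝ → ℝ, f ∈ H →
      Filter.Tendsto (fun t => f t / t ^ K) Filter.atTop (nhds 0) →
      ∃ (p : Polynomial ℝ) (x : ℝ → ℝ), x ∈ H ∧ (∀ t, f t = p.eval t + x t) ∧
        (Filter.Tendsto x Filter.atTop (nhds 0) ∨
          (StronglyNonPoly x ∧ Filter.Tendsto (fun t => |x t|) Filter.atTop Filter.atTop)) := by
  intro K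
  induction K using Nat.strong_induction_on with
  | _ K ih =>
  intro f hf hK
  classical
  rcases hH.tendsto_trichotomy hf with ⟨c, hc⟩|h|h
  · -- finite limit
    refine ⟨Polynomial.C c, fun t => f t - c, ?_, ?_, Or.inl ?_⟩
    · have := hH.add_mem hf (hH.neg_mem (hconst c))
      have he : (f + -(fun _ : ℝ => c)) = fun t => f t - c := by
        funext t; simp [sub_eq_add_neg]
      rwa [he] at this
    · intro t; simp
    · simpa using hc.sub (tendsto_const_nhds (x := c))
  on_goal 1 =>
    have habs : Filter.Tendsto (fun t => |f t|) Filter.atTop Filter.atTop :=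
      tendsto_abs_atTop_atTop.comp h
  on_goal 2 =>
    have habs : Filter.Tendsto (fun t => |f t|) Filter.atTop Filter.atTop :=
      tendsto_abs_atBot_atTop.comp h
  all_goals {
  -- |f| → ∞ case
  set P : ℕ → Prop := fun j => ∃ c : ℝ,
    Filter.Tendsto (fun t => f t / t ^ j) Filter.atTop (nhds c) with hPdef
  have hP0 : ¬ P 0 := by
    rintro ⟨c, hc⟩
    have hc' : Filter.Tendsto f Filter.atTop (nhds c) := by
      apply hc.congr; intro t; simp
    have : Filter.Tendsto (fun t => |f t|) Filter.atTop (nhds |c|) := hc'.abs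
    exact not_tendsto_atTop_of_tendsto_nhds this habs
  have hPK : P K := ⟨0, hK⟩
  have htri : ∀ j : ℕ, P j ∨
      Filter.Tendsto (fun t => |f t / t ^ j|) Filter.atTop Filter.atTop := fun j =>
    hH.ratio_trichotomy hf (hpow j) (pow_not_ev_zero j)
  set Q : ℕ → Prop := fun j => ¬ P j with hQdef
  set k := Nat.findGreatest Q K with hkdef
  have hQk : Q k := Nat.findGreatest_spec (Nat.zero_le K) hP0
  have hkK : k ≤ K := Nat.findGreatest_le K
  have hkltK : k < K := lt_of_le_of_ne hkK (fun he => hQk (he ▸ hPK))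
  have hPk1 : P (k+1) := by
    by_contra hq
    exact (Nat.findGreatest_is_greatest (Nat.lt_succ_self k) hkltK) hq
  obtain ⟨c, hck⟩ := hPk1
  have habsk : Filter.Tendsto (fun t => |f t / t ^ k|) Filter.atTop Filter.atTop := by
    rcases htri k with hp|hb
    · exact absurd hp hQk
    · exact hb
  by_cases hc0 : c = 0
  · -- f itself is strongly non-polynomial
    refine ⟨0, f, hf, by simp, Or.inr ⟨Or.inl ⟨k, ?_, ?_⟩, habs⟩⟩
    · exact tendsto_div_zero_of_abs_div_atTop habsk
    · rw [hc0] at hck; exact hck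
  · -- subtract leading term and recurse
    have hk1K : k + 1 < K := by
      rcases lt_or_eq_of_le (Nat.succ_le_of_lt hkltK) with h'|h'
      · exact h'
      · exfalso
        apply hc0
        have h2 : Filter.Tendsto (fun t => f t / t ^ K) Filter.atTop (nhds c) := by
          rw [← h']; exact hck
        exact tendsto_nhds_unique h2 hK
    set g : ℝ → ℝ := fun t => f t - c * t ^ (k+1) with hgdef
    have hgH : g ∈ H := by
      have h1 := hH.mul_mem (hconst c) (hpow (k+1))
      have h2 := hH.add_mem hf (hH.neg_mem h1)
      have he : (f + -((fun _ : ℝ => c) * fun t : ℝ => t ^ (k+1))) = g := by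
        funext t; simp [hgdef, sub_eq_add_neg]
      rwa [he] at h2
    have hgK : Filter.Tendsto (fun t => g t / t ^ (k+1)) Filter.atTop (nhds 0) := by
      have := hck.sub (tendsto_const_nhds (x := c))
      rw [sub_self] at this
      apply this.congr'
      filter_upwards [eventually_ge_atTop (1:ℝ)] with t ht
      have h0 : t ^ (k+1) ≠ 0 := ne_of_gt (pow_pos (lt_of_lt_of_le one_pos ht) _)
      simp only [hgdef]
      field_simp
    obtain ⟨p, x, hx, hfx, hcase⟩ := ih (k+1) hk1K g hgH hgK
    refine ⟨p + Polynomial.C c * Polynomial.X ^ (k+1), x, hx, ?_, hcase⟩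
    intro t
    have := hfx t
    simp only [hgdef] at this
    simp only [eval_add, eval_mul, eval_C, eval_pow, eval_X]
    linarith
  }
end HardyRatio
section Growth

open Filter Polynomial

variable {H : Set (ℝ → ℝ)}

lemma not_ev_zero_of_ev_ne {y : ℝ → ℝ} (h : ∀ᶠ t in Filter.atTop, y t ≠ 0) :
    ¬ (y =ᶠ[Filter.atTop] fun _ => (0:ℝ)) := by
  intro h0
  obtain ⟨t, h1, h2⟩ := (h.and h0).exists
  exact h1 h2

lemma snp_cases {x : ℝ → ℝ} (hs : StronglyNonPoly x)
    (habs : Filter.Tendsto (fun t => |x t|) Filter.atTop Filter.atTop) :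
    ∃ k : ℕ, Prec (fun t => t ^ k) x ∧ Prec x (fun t => t ^ (k+1)) := by
  rcases hs with h|h
  · exact h
  · exfalso
    have : Filter.Tendsto (fun t => |x t|) Filter.atTop (nhds |0|) := h.abs
    rw [abs_zero] at this
    exact not_tendsto_atTop_of_tendsto_nhds this habs

lemma exists_max_rel {n : ℕ} (R : Fin (n+1) → Fin (n+1) → Prop)
    (htot : ∀ i j, R i j ∨ R j i) (htrans : ∀ {i j k}, R i j → R j k → R i k) :
    ∃ i0, ∀ i, R i i0 := by
  induction n with
  | zero =>
      refine ⟨0, fun i => ?_⟩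
      have hi : i = 0 := Fin.ext (by omega)
      subst hi
      rcases htot 0 0 with h|h <;> exact h
  | succ n ih =>
      obtain ⟨i0, hi0⟩ := ih (fun i j => R i.castSucc j.castSucc)
        (fun i j => htot _ _) (fun h1 h2 => htrans h1 h2)
      rcases htot i0.castSucc (Fin.last (n+1)) with h|h
      · refine ⟨Fin.last (n+1), fun i => ?_⟩
        induction i using Fin.lastCases with
        | last => rcases htot (Fin.last (n+1)) (Fin.last (n+1)) with h'|h' <;> exact h'
        | cast j => exact htrans (hi0 j) h
      · refine ⟨i0.castSucc, fun i => ?_⟩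
        induction i using Fin.lastCases with
        | last => exact h
        | cast j => exact hi0 j

/-- growth domination: `x/y` has a finite limit. -/
def GDom (x y : ℝ → ℝ) : Prop :=
  ∃ c : ℝ, Filter.Tendsto (fun t => x t / y t) Filter.atTop (nhds c)

lemma gdom_total (hH : IsHardyField H) {x y : ℝ → ℝ} (hx : x ∈ H) (hy : y ∈ H)
    (hxne : ∀ᶠ t in Filter.atTop, x t ≠ 0) (hyne : ∀ᶠ t in Filter.atTop, y t ≠ 0) :
    GDom x y ∨ GDom y x := by
  rcases hH.ratio_trichotomy hx hy (not_ev_zero_of_ev_ne hyne) with h|h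
  · exact Or.inl h
  · exact Or.inr ⟨0, tendsto_div_zero_of_abs_div_atTop h⟩

lemma gdom_trans {x y z : ℝ → ℝ} (hy : ∀ᶠ t in Filter.atTop, y t ≠ 0)
    (h1 : GDom x y) (h2 : GDom y z) : GDom x z := by
  obtain ⟨c1, h1⟩ := h1
  obtain ⟨c2, h2⟩ := h2
  refine ⟨c1 * c2, ?_⟩
  apply (h1.mul h2).congr'
  filter_upwards [hy] with t ht
  rcases eq_or_ne (z t) 0 with h|h
  · simp [h]
  · field_simp

/-- key re-decomposition bound: if `x' = y + q` with `y ≺ xm`, `q` polynomial,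
`x'` and `xm` strongly non-polynomial with `|·| → ∞`, then `x' ≺ xm`. -/
lemma snp_prec_of_decomp {x' y xm : ℝ → ℝ} (q : Polynomial ℝ)
    (hx'eq : ∀ t, x' t = y t + q.eval t)
    (hy : Prec y xm)
    (hx's : StronglyNonPoly x')
    (hx'abs : Filter.Tendsto (fun t => |x' t|) Filter.atTop Filter.atTop)
    (hxms : StronglyNonPoly xm)
    (hxmabs : Filter.Tendsto (fun t => |xm t|) Filter.atTop Filter.atTop) :
    Prec x' xm := by
  obtain ⟨k, hk1, hk2⟩ := snp_cases hxms hxmabs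
  obtain ⟨k', hk'1, hk'2⟩ := snp_cases hx's hx'abs
  have hxmne : ∀ᶠ t in Filter.atTop, xm t ≠ 0 := ev_ne_zero_of_abs_tendsto hxmabs
  have hx'ne : ∀ᶠ t in Filter.atTop, x' t ≠ 0 := ev_ne_zero_of_abs_tendsto hx'abs
  rcases eq_or_ne q 0 with rfl|hq0
  · apply hy.congr
    intro t
    simp [hx'eq t]
  set d := q.natDegree with hddef
  -- split : the division x'/xm = y/xm + q/xm (pointwise, unconditionally)
  have hsplit : ∀ t, x' t / xm t = y t / xm t + q.eval t / xm t := by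
    intro t; rw [hx'eq t, add_div]
  by_cases hdk : d ≤ k
  · -- q/xm → 0, done
    have hq1 : ∃ c : ℝ, Filter.Tendsto (fun t => q.eval t / t ^ k) Filter.atTop (nhds c) := by
      rcases lt_or_eq_of_le hdk with h|h
      · exact ⟨0, poly_div_pow_tendsto_zero q (lt_of_le_of_lt (Polynomial.degree_le_natDegree) (by exact_mod_cast h))⟩
      · refine ⟨q.leadingCoeff, ?_⟩
        have := poly_div_pow_tendsto q hq0
        rw [← hddef, h] at this
        exact this
    obtain ⟨c, hc⟩ := hq1
    have hqxm : Filter.Tendsto (fun t => q.eval t / xm t) Filter.atTop (nhds 0) := by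
      have key := hc.mul hk1
      rw [mul_zero] at key
      apply key.congr'
      filter_upwards [eventually_ge_atTop (1:ℝ)] with t ht
      have h0 : (t:ℝ) ^ k ≠ 0 := ne_of_gt (pow_pos (lt_of_lt_of_le one_pos ht) _)
      rcases eq_or_ne (xm t) 0 with h|h
      · simp [h]
      · field_simp
    have := hy.add hqxm
    rw [add_zero] at this
    apply this.congr
    intro t
    exact (hsplit t).symm
  · -- k < d : contradiction
    exfalso
    push_neg at hdk
    have hlc : q.leadingCoeff ≠ 0 := Polynomial.leadingCoeff_ne_zero.2 hq0
    -- xm / t^d → 0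
    have hxmd : Filter.Tendsto (fun t => xm t / t ^ d) Filter.atTop (nhds 0) := by
      have key := mul_bdd_zero hk2 (ev_abs_pow_div_pow_le_one (Nat.succ_le_of_lt hdk))
      apply key.congr'
      filter_upwards [eventually_ge_atTop (1:ℝ)] with t ht
      have h0 : (t:ℝ) ^ (k+1) ≠ 0 := ne_of_gt (pow_pos (lt_of_lt_of_le one_pos ht) _)
      field_simp
    -- y / t^d → 0
    have hyd : Filter.Tendsto (fun t => y t / t ^ d) Filter.atTop (nhds 0) := by
      have key := hy.mul hxmd
      rw [mul_zero] at key
      apply key.congr'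
      filter_upwards [hxmne] with t ht
      rcases eq_or_ne ((t:ℝ) ^ d) 0 with h|h
      · simp [h]
      · field_simp
    -- q / t^d → leadingCoeff
    have hqd : Filter.Tendsto (fun t => q.eval t / t ^ d) Filter.atTop (nhds q.leadingCoeff) :=
      poly_div_pow_tendsto q hq0
    -- x'/t^d → leadingCoeff ≠ 0
    have hx'd : Filter.Tendsto (fun t => x' t / t ^ d) Filter.atTop (nhds q.leadingCoeff) := by
      have := hyd.add hqd
      rw [zero_add] at this
      apply this.congr
      intro t
      rw [hx'eq t, add_div]
    -- compare d with k'
    by_cases hdk' : d ≤ k'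
    · -- |x'/t^d| → ∞, contradiction
      have htdx' : Filter.Tendsto (fun t => t ^ d / x' t) Filter.atTop (nhds 0) := by
        have key := mul_bdd_zero hk'1 (ev_abs_pow_div_pow_le_one hdk')
        apply key.congr'
        filter_upwards [eventually_ge_atTop (1:ℝ)] with t ht
        have h0 : (t:ℝ) ^ k' ≠ 0 := ne_of_gt (pow_pos (lt_of_lt_of_le one_pos ht) _)
        rcases eq_or_ne (x' t) 0 with h|h
        · simp [h]
        · field_simp
      have habs := tendsto_abs_div_atTop_of_div_zero htdx' hx'ne
        (by filter_upwards [eventually_ge_atTop (1:ℝ)] with t ht;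
            exact ne_of_gt (pow_pos (lt_of_lt_of_le one_pos ht) _))
      exact not_tendsto_atTop_of_tendsto_nhds hx'd.abs habs
    · -- d ≥ k'+1 : x'/t^d → 0, so leadingCoeff = 0, contradiction
      push_neg at hdk'
      have : Filter.Tendsto (fun t => x' t / t ^ d) Filter.atTop (nhds 0) := by
        have key := mul_bdd_zero hk'2 (ev_abs_pow_div_pow_le_one (Nat.succ_le_of_lt hdk'))
        apply key.congr'
        filter_upwards [eventually_ge_atTop (1:ℝ)] with t ht
        have h0 : (t:ℝ) ^ (k'+1) ≠ 0 := ne_of_gt (pow_pos (lt_of_lt_of_le one_pos ht) _)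
        field_simp
      exact hlc (tendsto_nhds_unique hx'd this)

end Growth
section Members

open Filter Polynomial

variable {H : Set (ℝ → ℝ)}

lemma IsHardyField.smul_mem (hH : IsHardyField H) (hconst : ∀ c : ℝ, (fun _ : ℝ => c) ∈ H)
    {f : ℝ → ℝ} (c : ℝ) (hf : f ∈ H) : c • f ∈ H := by
  have h := hH.mul_mem (hconst c) hf
  have he : ((fun _ : ℝ => c) * f) = c • f := by funext t; simp
  rwa [he] at h

lemma IsHardyField.sub_mem (hH : IsHardyField H) {f g : ℝ → ℝ} (hf : f ∈ H) (hg : g ∈ H) :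
    f - g ∈ H := by
  have h := hH.add_mem hf (hH.neg_mem hg)
  have he : f + -g = f - g := by funext t; simp [sub_eq_add_neg]
  rwa [he] at h

lemma IsHardyField.poly_mem (hH : IsHardyField H) (hconst : ∀ c : ℝ, (fun _ : ℝ => c) ∈ H)
    (hpow : ∀ k : ℕ, (fun t : ℝ => t ^ k) ∈ H) (p : Polynomial ℝ) :
    (fun t => p.eval t) ∈ H := by
  induction p using Polynomial.induction_on' with
  | add p q hp hq =>
      have h := hH.add_mem hp hq
      have he : ((fun t => p.eval t) + fun t => q.eval t) = fun t => (p+q).eval t := by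
        funext t; simp
      rwa [he] at h
  | monomial n a =>
      have h := hH.mul_mem (hconst a) (hpow n)
      have he : ((fun _ : ℝ => a) * fun t : ℝ => t ^ n) = fun t => (monomial n a).eval t := by
        funext t; simp [eval_monomial]
      rwa [he] at h

lemma range_snoc' {α : Type*} {n : ℕ} (f : Fin n → α) (a : α) :
    Set.range (Fin.snoc f a : Fin (n+1) → α) = Set.range f ∪ {a} := by
  ext y
  constructor
  · rintro ⟨i, rfl⟩
    induction i using Fin.lastCases with
    | last => right; simp
    | cast j => left; exact ⟨j, by simp⟩
  · rintro (⟨j, rfl⟩ | rfl)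
    · exact ⟨j.castSucc, by simp⟩
    · exact ⟨Fin.last n, by simp⟩

end Members
section Elimination

open Filter Polynomial

variable {H : Set (ℝ → ℝ)}

lemma elimination (hH : IsHardyField H)
    (hconst : ∀ c : ℝ, (fun _ : ℝ => c) ∈ H) (hpow : ∀ k : ℕ, (fun t : ℝ => t ^ k) ∈ H)
    (K : ℕ) :
    ∀ m : ℕ, ∀ h xh : Fin m → ℝ → ℝ, ∀ qh : Fin m → Polynomial ℝ,
      (∀ i, xh i ∈ H) →
      (∀ i, StronglyNonPoly (xh i)) →
      (∀ i, Filter.Tendsto (fun t => |xh i t|) Filter.atTop Filter.atTop) →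
      (∀ i t, h i t = (qh i).eval t + xh i t) →
      LinearIndependent ℝ h →
      Submodule.span ℝ (Set.range h) ≤ smallO K →
      Submodule.span ℝ (Set.range h) ⊓ polyO1 = ⊥ →
      ∃ (g x : Fin m → ℝ → ℝ) (q : Fin m → Polynomial ℝ),
        Submodule.span ℝ (Set.range g) = Submodule.span ℝ (Set.range h) ∧
        LinearIndependent ℝ g ∧
        (∀ j, x j ∈ H) ∧ (∀ j, StronglyNonPoly (x j)) ∧
        (∀ j, Filter.Tendsto (fun t => |x j t|) Filter.atTop Filter.atTop) ∧
        (∀ j t, g j t = (q j).eval t + x j t) ∧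
        (∀ i j, i ≠ j → Prec (x i) (x j) ∨ Prec (x j) (x i)) ∧
        (∀ z : ℝ → ℝ, (∀ᶠ t in Filter.atTop, z t ≠ 0) →
          (∀ i, Prec (xh i) z) → ∀ j, Prec (x j) z) := by
  intro m
  induction m with
  | zero =>
      intro h xh qh _ _ _ _ hli _ _
      exact ⟨h, xh, qh, rfl, hli, fun j => j.elim0, fun j => j.elim0, fun j => j.elim0,
        fun j => j.elim0, fun i => i.elim0, fun z _ _ j => j.elim0⟩
  | succ m ih =>
      intro h xh qh hxH hxS hxA hdec hli hsmall hbot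
      classical
      have hne : ∀ i, ∀ᶠ t in Filter.atTop, xh i t ≠ 0 :=
        fun i => ev_ne_zero_of_abs_tendsto (hxA i)
      obtain ⟨i0, hi0⟩ := exists_max_rel (fun i j => GDom (xh i) (xh j))
        (fun i j => gdom_total hH (hxH i) (hxH j) (hne i) (hne j))
        (fun {i j k} h1 h2 => gdom_trans (hne j) h1 h2)
      set e : Equiv.Perm (Fin (m+1)) := Equiv.swap i0 (Fin.last m) with hedef
      set he : Fin (m+1) → ℝ → ℝ := h ∘ e with hhedef
      set xe : Fin (m+1) → ℝ → ℝ := xh ∘ e with hxedef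
      set qe : Fin (m+1) → Polynomial ℝ := qh ∘ e with hqedef
      have hdece : ∀ i t, he i t = (qe i).eval t + xe i t := fun i t => hdec (e i) t
      have hxeH : ∀ i, xe i ∈ H := fun i => hxH (e i)
      have hxeS : ∀ i, StronglyNonPoly (xe i) := fun i => hxS (e i)
      have hxeA : ∀ i, Filter.Tendsto (fun t => |xe i t|) Filter.atTop Filter.atTop :=
        fun i => hxA (e i)
      have hnee : ∀ i, ∀ᶠ t in Filter.atTop, xe i t ≠ 0 := fun i => hne (e i)
      have hxel : xe (Fin.last m) = xh i0 := by
        simp only [hxedef, Function.comp_apply, hedef, Equiv.swap_apply_right]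
      have hmax : ∀ i, GDom (xe i) (xe (Fin.last m)) := by
        intro i; rw [hxel]; exact hi0 (e i)
      have hlie : LinearIndependent ℝ he := hli.comp e e.injective
      have hspan_he : Submodule.span ℝ (Set.range he) = Submodule.span ℝ (Set.range h) := by
        rw [hhedef, e.surjective.range_comp]
      have hheH : ∀ i, he i ∈ H := by
        intro i
        have heq : he i = (fun t => (qe i).eval t) + xe i := by
          funext t; simp [hdece i t]
        rw [heq]
        exact hH.add_mem (hH.poly_mem hconst hpow _) (hxeH i)
      -- coefficients of elimination
      have hcex : ∀ i : Fin m, ∃ cc : ℝ, Filter.Tendsto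
          (fun t => xe i.castSucc t / xe (Fin.last m) t) Filter.atTop (nhds cc) :=
        fun i => hmax i.castSucc
      choose c hc using hcex
      set h2 : Fin m → ℝ → ℝ := fun i => he i.castSucc - c i • he (Fin.last m) with hh2def
      have hh2H : ∀ i, h2 i ∈ H := fun i =>
        hH.sub_mem (hheH _) (hH.smul_mem hconst _ (hheH _))
      set V := Submodule.span ℝ (Set.range h) with hVdef
      have hh2V : ∀ i, h2 i ∈ V := by
        intro i
        have h1 : he i.castSucc ∈ V := by
          rw [← hspan_he]; exact Submodule.subset_span ⟨i.castSucc, rfl⟩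
        have h2m : he (Fin.last m) ∈ V := by
          rw [← hspan_he]; exact Submodule.subset_span ⟨Fin.last m, rfl⟩
        exact Submodule.sub_mem _ h1 (Submodule.smul_mem _ _ h2m)
      -- the subtracted x-part
      set y2 : Fin m → ℝ → ℝ := fun i => fun t => xe i.castSucc t - c i * xe (Fin.last m) t
        with hy2def
      have hy2prec : ∀ i, Prec (y2 i) (xe (Fin.last m)) := by
        intro i
        have key := (hc i).sub (tendsto_const_nhds (x := c i))
        rw [sub_self] at key
        apply key.congr'
        filter_upwards [hnee (Fin.last m)] with t ht
        simp only [hy2def]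
        field_simp
      have hh2dec : ∀ i t, h2 i t =
          (qe i.castSucc - c i • qe (Fin.last m)).eval t + y2 i t := by
        intro i t
        have e1 := hdece i.castSucc t
        have e2 := hdece (Fin.last m) t
        have e0 : h2 i t = he i.castSucc t - c i * he (Fin.last m) t := rfl
        rw [e0, e1, e2, eval_sub, eval_smul]
        simp only [smul_eq_mul, hy2def]
        ring
      -- re-decompose each h2 i
      have hredec : ∀ i : Fin m, ∃ (p2 : Polynomial ℝ) (x2 : ℝ → ℝ), x2 ∈ H ∧
          StronglyNonPoly x2 ∧ Filter.Tendsto (fun t => |x2 t|) Filter.atTop Filter.atTop ∧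
          (∀ t, h2 i t = p2.eval t + x2 t) ∧ Prec x2 (xe (Fin.last m)) := by
        intro i
        have hh2K : Filter.Tendsto (fun t => h2 i t / t ^ K) Filter.atTop (nhds 0) :=
          hsmall (hh2V i)
        obtain ⟨p2, x2, hx2H, hdec2, hcase⟩ := hH.decomp hconst hpow K (h2 i) (hh2H i) hh2K
        rcases hcase with h0|⟨hS, hA⟩
        · exfalso
          have hmem : h2 i ∈ polyO1 := by
            refine ⟨p2, ?_⟩
            apply h0.congr
            intro t
            have := hdec2 t
            linarith
          have hbotmem : h2 i ∈ (Submodule.span ℝ (Set.range h) ⊓ polyO1) :=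
            Submodule.mem_inf.2 ⟨hh2V i, hmem⟩
          rw [hbot, Submodule.mem_bot] at hbotmem
          -- contradiction with linear independence
          have hinj : Function.Injective ![i.castSucc, Fin.last m] := by
            intro a b hab
            have hne' : i.castSucc ≠ Fin.last m := (Fin.castSucc_lt_last i).ne
            fin_cases a <;> fin_cases b <;>
              simp only [Matrix.cons_val_zero, Matrix.cons_val_one, Matrix.head_cons] at hab <;>
              first
                | rfl
                | exact absurd hab hne'
                | exact absurd hab.symm hne'
          have hpair := hlie.comp _ hinj
          obtain ⟨_, hnsmul⟩ := linearIndependent_fin2.1 hpair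
          have : he i.castSucc = c i • he (Fin.last m) := by
            have := sub_eq_zero.1 hbotmem
            exact this
          exact hnsmul (c i) (by simpa using this.symm)
        · refine ⟨p2, x2, hx2H, hS, hA, hdec2, ?_⟩
          have hx2eq : ∀ t, x2 t =
              y2 i t + ((qe i.castSucc - c i • qe (Fin.last m)) - p2).eval t := by
            intro t
            have h1 := hdec2 t
            have h2' := hh2dec i t
            simp only [eval_sub] at h2' ⊢
            linarith
          exact snp_prec_of_decomp _ hx2eq (hy2prec i) hS hA (hxeS (Fin.last m))
            (hxeA (Fin.last m))
      choose p2 x2 hx2H hx2S hx2A hdec2 hprec2 using hredec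
      -- the snoc family h3 and its properties
      set h3 : Fin (m+1) → ℝ → ℝ := Fin.snoc h2 (he (Fin.last m)) with hh3def
      have hlih3 : LinearIndependent ℝ h3 := by
        rw [Fintype.linearIndependent_iff]
        intro d hd
        set dd : Fin (m+1) → ℝ := Fin.snoc (fun j : Fin m => d j.castSucc)
          (d (Fin.last m) - ∑ j : Fin m, d j.castSucc * c j) with hdddef
        have hsum : ∑ i, d i • h3 i = ∑ i : Fin (m+1), dd i • he i := by
          rw [Fin.sum_univ_castSucc, Fin.sum_univ_castSucc]
          simp only [hh3def, hdddef, Fin.snoc_castSucc, Fin.snoc_last, hh2def]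
          rw [sub_smul]
          simp only [smul_sub, Finset.sum_sub_distrib, smul_smul]
          rw [← Finset.sum_smul]
          abel
        rw [hsum] at hd
        have hz := Fintype.linearIndependent_iff.1 hlie _ hd
        intro i
        induction i using Fin.lastCases with
        | last =>
            have h1 := hz (Fin.last m)
            rw [hdddef, Fin.snoc_last] at h1
            have h2' : ∀ j : Fin m, d j.castSucc = 0 := by
              intro j
              have := hz j.castSucc
              rwa [hdddef, Fin.snoc_castSucc] at this
            have hzero : (∑ j : Fin m, d j.castSucc * c j) = 0 := by
              simp [h2']
            rw [hzero] at h1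
            linarith
        | cast j =>
            have := hz j.castSucc
            rwa [hdddef, Fin.snoc_castSucc] at this
      obtain ⟨hlih2, hlast_notin⟩ := linearIndependent_fin_snoc.1 hlih3
      have hspan3 : Submodule.span ℝ (Set.range h3) = Submodule.span ℝ (Set.range he) := by
        apply le_antisymm
        · rw [Submodule.span_le]
          rintro _ ⟨i, rfl⟩
          induction i using Fin.lastCases with
          | last =>
              simp only [hh3def, Fin.snoc_last]
              exact Submodule.subset_span ⟨Fin.last m, rfl⟩
          | cast j =>
              simp only [hh3def, Fin.snoc_castSucc, hh2def]
              exact Submodule.sub_mem _ (Submodule.subset_span ⟨j.castSucc, rfl⟩)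
                (Submodule.smul_mem _ _ (Submodule.subset_span ⟨Fin.last m, rfl⟩))
        · rw [Submodule.span_le]
          rintro _ ⟨i, rfl⟩
          induction i using Fin.lastCases with
          | last =>
              have : he (Fin.last m) = h3 (Fin.last m) := by simp [hh3def]
              rw [this]
              exact Submodule.subset_span ⟨Fin.last m, rfl⟩
          | cast j =>
              have : he j.castSucc = h3 j.castSucc + c j • h3 (Fin.last m) := by
                simp only [hh3def, Fin.snoc_castSucc, Fin.snoc_last, hh2def]
                abel
              rw [this]
              exact Submodule.add_mem _ (Submodule.subset_span ⟨j.castSucc, rfl⟩)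
                (Submodule.smul_mem _ _ (Submodule.subset_span ⟨Fin.last m, rfl⟩))
      have hsub2 : Submodule.span ℝ (Set.range h2) ≤ V := by
        have hr : Set.range h2 ⊆ Set.range h3 := by
          rintro _ ⟨j, rfl⟩
          exact ⟨j.castSucc, by simp [hh3def]⟩
        calc Submodule.span ℝ (Set.range h2) ≤ Submodule.span ℝ (Set.range h3) :=
              Submodule.span_mono hr
          _ = Submodule.span ℝ (Set.range he) := hspan3
          _ = V := hspan_he
      -- recursive call
      obtain ⟨g2, x2', q2', hspang2, hlig2, hg2H, hg2S, hg2A, hg2dec, hg2pair, hg2z⟩ :=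
        ih h2 x2 p2 hx2H hx2S hx2A (fun i t => hdec2 i t) hlih2
          (le_trans hsub2 hsmall)
          (le_antisymm (by rw [← hbot]; exact inf_le_inf_right _ hsub2) bot_le)
      have hxelne : ∀ᶠ t in Filter.atTop, xe (Fin.last m) t ≠ 0 := hnee (Fin.last m)
      refine ⟨Fin.snoc g2 (he (Fin.last m)), Fin.snoc x2' (xe (Fin.last m)),
        Fin.snoc q2' (qe (Fin.last m)), ?_, ?_, ?_, ?_, ?_, ?_, ?_, ?_⟩
      · -- span equality
        rw [range_snoc', Submodule.span_union, hspang2, ← Submodule.span_union,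
          ← range_snoc' h2 (he (Fin.last m)), ← hh3def, hspan3, hspan_he]
      · -- linear independence
        refine linearIndependent_fin_snoc.2 ⟨hlig2, ?_⟩
        rw [hspang2]
        exact hlast_notin
      · intro j
        induction j using Fin.lastCases with
        | last => simpa using hxeH (Fin.last m)
        | cast j => simpa using hg2H j
      · intro j
        induction j using Fin.lastCases with
        | last => simpa using hxeS (Fin.last m)
        | cast j => simpa using hg2S j
      · intro j
        induction j using Fin.lastCases with
        | last => simpa using hxeA (Fin.last m)
        | cast j => simpa using hg2A j
      · intro j t
        induction j using Fin.lastCases with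
        | last => simpa using hdece (Fin.last m) t
        | cast j => simpa using hg2dec j t
      · -- pairwise distinct growth
        intro i j hij
        induction i using Fin.lastCases with
        | last =>
            induction j using Fin.lastCases with
            | last => exact absurd rfl hij
            | cast j =>
                right
                simp only [Fin.snoc_castSucc, Fin.snoc_last]
                exact hg2z (xe (Fin.last m)) hxelne (fun i => hprec2 i) j
        | cast i' =>
            induction j using Fin.lastCases with
            | last =>
                left
                simp only [Fin.snoc_castSucc, Fin.snoc_last]
                exact hg2z (xe (Fin.last m)) hxelne (fun i => hprec2 i) i'
            | cast j' =>
                have hne' : i' ≠ j' := by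
                  intro hEq; exact hij (by rw [hEq])
                have := hg2pair i' j' hne'
                simpa only [Fin.snoc_castSucc] using this
      · -- bound propagation
        intro z hzne hzall j
        have hlastz : Prec (xe (Fin.last m)) z := hzall (e (Fin.last m))
        induction j using Fin.lastCases with
        | last => simpa using hlastz
        | cast j =>
            have hx2z : ∀ i, Prec (x2 i) z :=
              fun i => (hprec2 i).trans_ev hlastz hxelne
            simpa using hg2z z hzne hx2z j

end Elimination

set_option maxHeartbeats 1000000
set_option synthInstance.maxHeartbeats 1000000

/-- The real linear span of `a_1,...,a_k` admits a basis
`(g_1,...,g_m, u_1,...,u_ℓ)` where each `u_i` is a real polynomial plus `o(1)`, each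
`g_j` is a real polynomial plus a strongly non-polynomial `x_j ∈ H` with
`|x_j(t)| → +∞`, and the `x_j` have pairwise distinct growth rates. -/
theorem stmt_1 (H : Set (ℝ → ℝ)) (hH : IsHardyField H) (hLE : ContainsLE H)
    (k : ℕ) (a : Fin k → ℝ → ℝ) (ha : ∀ i, a i ∈ H) (hgr : ∀ i, PolyGrowth (a i)) :
    ∃ (m ℓ : ℕ) (g : Fin m → ℝ → ℝ) (u : Fin ℓ → ℝ → ℝ),
      LinearIndependent ℝ (Sum.elim g u) ∧
      Submodule.span ℝ (Set.range (Sum.elim g u)) =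
        Submodule.span ℝ (Set.range a) ∧
      (∀ i : Fin ℓ, ∃ p : Polynomial ℝ,
        Filter.Tendsto (fun t => u i t - p.eval t) Filter.atTop (nhds 0)) ∧
      ∃ x : Fin m → ℝ → ℝ,
        (∀ j, x j ∈ H ∧ StronglyNonPoly (x j) ∧
          Filter.Tendsto (fun t => |x j t|) Filter.atTop Filter.atTop ∧
          ∃ q : Polynomial ℝ, ∀ t, g j t = q.eval t + x j t) ∧
        ∀ i j, i ≠ j →
          (Filter.Tendsto (fun t => x i t / x j t) Filter.atTop (nhds 0) ∨
            Filter.Tendsto (fun t => |x i t / x j t|) Filter.atTop Filter.atTop) := by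
  classical
  have hconst : ∀ c : ℝ, (fun _ : ℝ => c) ∈ H := fun c => hLE _ (IsLE.const c)
  have hpow : ∀ n : ℕ, (fun t : ℝ => t ^ n) ∈ H := fun n => hLE _ (isLE_pow n)
  set V : Submodule ℝ (ℝ → ℝ) := Submodule.span ℝ (Set.range a) with hVdef
  -- V ⊆ H
  have hVH : ∀ f ∈ V, f ∈ H := by
    intro f hf
    induction hf using Submodule.span_induction with
    | mem f hf => obtain ⟨i, rfl⟩ := hf; exact ha i
    | zero => exact hH.zero_mem
    | add f g _ _ hf hg => exact hH.add_mem hf hg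
    | smul c f _ hf => exact hH.smul_mem hconst c hf
  -- a common growth bound
  obtain ⟨K, hVK⟩ : ∃ K : ℕ, V ≤ smallO K := by
    refine ⟨Finset.univ.sup (fun i => (hgr i).choose), ?_⟩
    rw [hVdef, Submodule.span_le]
    rintro _ ⟨i, rfl⟩
    have h1 := (hgr i).choose_spec.2
    exact growth_le (Finset.le_sup (Finset.mem_univ i)) h1
  -- the subspace of almost-polynomial elements
  set W : Submodule ℝ (ℝ → ℝ) := V ⊓ polyO1 with hWdef
  have hWV : W ≤ V := inf_le_left
  have : FiniteDimensional ℝ V := FiniteDimensional.span_of_finite ℝ (Set.finite_range a)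
  -- complement of W inside V
  set Wv : Submodule ℝ V := W.comap V.subtype with hWvdef
  obtain ⟨Uv, hcompl⟩ := Submodule.exists_isCompl Wv
  set U : Submodule ℝ (ℝ → ℝ) := Uv.map V.subtype with hUdef
  have hmapW : Wv.map V.subtype = W := by
    rw [hWvdef, Submodule.map_comap_subtype, inf_eq_right.2 hWV]
  have hUV : U ≤ V := by
    rw [hUdef]
    rintro _ ⟨y, _, rfl⟩
    exact y.2
  have hUW_bot : U ⊓ W = ⊥ := by
    rw [hUdef, ← hmapW, ← Submodule.map_inf _ (Submodule.injective_subtype V),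
      inf_comm, hcompl.inf_eq_bot, Submodule.map_bot]
  have hUW_top : U ⊔ W = V := by
    rw [hUdef, ← hmapW, ← Submodule.map_sup, sup_comm, hcompl.sup_eq_top,
      Submodule.map_top, Submodule.range_subtype]
  -- finite dimensionality + bases
  have hWfin : FiniteDimensional ℝ W := Submodule.finiteDimensional_of_le hWV
  have hUfin : FiniteDimensional ℝ U := Submodule.finiteDimensional_of_le hUV
  set ℓ : ℕ := Module.finrank ℝ W
  set m : ℕ := Module.finrank ℝ U
  set bW : Module.Basis (Fin ℓ) ℝ W := Module.finBasis ℝ W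
  set bU : Module.Basis (Fin m) ℝ U := Module.finBasis ℝ U
  set u : Fin ℓ → ℝ → ℝ := fun i => (W.subtype ∘ bW) i with hudef
  set h : Fin m → ℝ → ℝ := fun i => (U.subtype ∘ bU) i with hhdef
  have hu_li : LinearIndependent ℝ u := bW.linearIndependent.map' _ (Submodule.ker_subtype W)
  have hh_li : LinearIndependent ℝ h := bU.linearIndependent.map' _ (Submodule.ker_subtype U)
  have hu_span : Submodule.span ℝ (Set.range u) = W := by
    rw [hudef, Set.range_comp, Submodule.span_image, bW.span_eq, Submodule.map_top,
      Submodule.range_subtype]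
  have hh_span : Submodule.span ℝ (Set.range h) = U := by
    rw [hhdef, Set.range_comp, Submodule.span_image, bU.span_eq, Submodule.map_top,
      Submodule.range_subtype]
  have hhU : ∀ i, h i ∈ U := fun i => (bU i).2
  have hhV : ∀ i, h i ∈ V := fun i => hUV (hhU i)
  -- decompose each h i
  have hdecompose : ∀ i : Fin m, ∃ (q : Polynomial ℝ) (x : ℝ → ℝ), x ∈ H ∧
      StronglyNonPoly x ∧ Filter.Tendsto (fun t => |x t|) Filter.atTop Filter.atTop ∧
      ∀ t, h i t = q.eval t + x t := by
    intro i
    obtain ⟨q, x, hxH, hdec, hcase⟩ := hH.decomp hconst hpow K (h i) (hVH _ (hhV i))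
      (hVK (hhV i))
    rcases hcase with h0|⟨hS, hA⟩
    · exfalso
      have hmem : h i ∈ polyO1 := by
        refine ⟨q, ?_⟩
        apply h0.congr
        intro t
        have := hdec t
        linarith
      have : h i ∈ U ⊓ W := ⟨hhU i, Submodule.mem_inf.2 ⟨hhV i, hmem⟩⟩
      rw [hUW_bot, Submodule.mem_bot] at this
      have hne := hh_li.ne_zero i
      exact hne this
    · exact ⟨q, x, hxH, hS, hA, fun t => hdec t⟩
  choose qh xh hxhH hxhS hxhA hxhdec using hdecompose
  -- the span conditions for elimination
  have hsmall : Submodule.span ℝ (Set.range h) ≤ smallO K := by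
    rw [hh_span]; exact le_trans hUV hVK
  have hbot : Submodule.span ℝ (Set.range h) ⊓ polyO1 = ⊥ := by
    rw [hh_span]
    apply le_antisymm _ bot_le
    intro f hf
    rw [← hUW_bot]
    obtain ⟨hf1, hf2⟩ := Submodule.mem_inf.1 hf
    exact Submodule.mem_inf.2 ⟨hf1, Submodule.mem_inf.2 ⟨hUV hf1, hf2⟩⟩
  -- eliminate
  obtain ⟨g, x, q, hgspan, hg_li, hxH', hxS', hxA', hgdec, hpair, _⟩ :=
    elimination hH hconst hpow K m h xh qh hxhH hxhS hxhA hxhdec hh_li hsmall hbot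
  refine ⟨m, ℓ, g, u, ?_, ?_, ?_, x, ?_, ?_⟩
  · -- linear independence of Sum.elim g u
    apply LinearIndependent.sum_type hg_li hu_li
    rw [hgspan, hh_span, hu_span]
    exact disjoint_iff.2 hUW_bot
  · -- span equality
    rw [Set.Sum.elim_range, Submodule.span_union, hgspan, hh_span, hu_span, hUW_top]
  · -- u's are polynomial + o(1)
    intro i
    have : u i ∈ polyO1 := ((bW i).2 : (bW i : ℝ → ℝ) ∈ W).2
    exact this
  · intro j
    exact ⟨hxH' j, hxS' j, hxA' j, q j, hgdec j⟩
  · intro i j hij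
    rcases hpair i j hij with h1|h1
    · exact Or.inl h1
    · exact Or.inr (tendsto_abs_div_atTop_of_div_zero h1
        (ev_ne_zero_of_abs_tendsto (hxA' i)) (ev_ne_zero_of_abs_tendsto (hxA' j)))


end
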